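/- Condition on the edge set and labels {(f, U_f) : f ∈ MST_n} of the minimum spanning tree of K_n with i.i.d. Uniform[0,1] labels. Then the labels {U_e : e ∉ MST_n} of the external edges are conditionally independent, and U_e for e = (u,v) is conditionally Uniform on [m_e, 1], where m_e = max{U_f : f on the MST_n-path from u to v}. -/

import Mathlib

open MeasureTheory

/-- `T` is a spanning tree of the graph `G`. -/
def IsSpanningTree {V : Type*} [Fintype V] (G : SimpleGraph V) (T : Finset (Sym2 V)) : Prop :=
  ↑T ⊆ G.edgeSet ∧ (SimpleGraph.fromEdgeSet (↑T : Set (Sym2 V))).IsTree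

set_option maxHeartbeats 1000000
open SimpleGraph
open scoped Classical

variable {V : Type*}

/-- Splitting reachability across a deleted edge. -/
lemma reach_split {G : SimpleGraph V} {a b z t : V} (w : G.Walk z t) :
    (G.deleteEdges {s(a,b)}).Reachable z t ∨
    ((G.deleteEdges {s(a,b)}).Reachable z a ∧ (G.deleteEdges {s(a,b)}).Reachable b t) ∨
    ((G.deleteEdges {s(a,b)}).Reachable z b ∧ (G.deleteEdges {s(a,b)}).Reachable a t) := by
  set H := G.deleteEdges {s(a,b)} with hH
  induction w with
  | nil => exact Or.inl (Reachable.refl _)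
  | @cons z c t hadj w ih =>
    by_cases hef : s(z, c) = s(a, b)
    · rw [Sym2.eq_iff] at hef
      obtain ⟨hz, hc⟩ | ⟨hz, hc⟩ := hef
      · subst hz; subst hc
        rcases ih with h | ⟨h1, h2⟩ | ⟨h1, h2⟩
        · exact Or.inr (Or.inl ⟨Reachable.refl _, h⟩)
        · exact Or.inl (h1.symm.trans h2)
        · exact Or.inl h2
      · subst hz; subst hc
        rcases ih with h | ⟨h1, h2⟩ | ⟨h1, h2⟩
        · exact Or.inr (Or.inr ⟨Reachable.refl _, h⟩)
        · exact Or.inl h2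
        · exact Or.inl (h1.symm.trans h2)
    · have hadj' : H.Adj z c := by
        rw [hH, deleteEdges_adj]
        exact ⟨hadj, by simpa using hef⟩
      rcases ih with h | ⟨h1, h2⟩ | ⟨h1, h2⟩
      · exact Or.inl (hadj'.reachable.trans h)
      · exact Or.inr (Or.inl ⟨hadj'.reachable.trans h1, h2⟩)
      · exact Or.inr (Or.inr ⟨hadj'.reachable.trans h1, h2⟩)

/-- In a connected graph, after deleting an edge, every vertex reaches one of its endpoints. -/
lemma two_comp {G : SimpleGraph V} (hG : G.Preconnected) (a b z : V) :
    (G.deleteEdges {s(a,b)}).Reachable z a ∨ (G.deleteEdges {s(a,b)}).Reachable z b := by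
  obtain ⟨w⟩ := hG z a
  rcases reach_split (a := a) (b := b) w with h | ⟨h1, _⟩ | ⟨h1, _⟩
  · exact Or.inl h
  · exact Or.inl h1
  · exact Or.inr h1

/-- Splitting a duplicate-free walk at an edge on it. -/
lemma split_at_edge {G : SimpleGraph V} {x y a b : V} (w : G.Walk x y)
    (hnd : w.edges.Nodup) (hmem : s(a,b) ∈ w.edges) :
    ∃ a₁ b₁ : V, s(a₁,b₁) = s(a,b) ∧ (G.deleteEdges {s(a,b)}).Reachable x a₁ ∧
      (G.deleteEdges {s(a,b)}).Reachable b₁ y := by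
  set H := G.deleteEdges {s(a,b)} with hH
  induction w with
  | nil => simp at hmem
  | @cons x c y hadj w ih =>
    rw [Walk.edges_cons, List.nodup_cons] at hnd
    by_cases hef : s(x, c) = s(a, b)
    · refine ⟨x, c, hef, Reachable.refl _, ?_⟩
      refine ⟨w.transfer H ?_⟩
      intro e he
      rw [hH, edgeSet_deleteEdges]
      refine ⟨w.edges_subset_edgeSet he, ?_⟩
      simp only [Set.mem_singleton_iff]
      rintro rfl
      exact hnd.1 (hef ▸ he)
    · have hmem' : s(a,b) ∈ w.edges := by
        rcases List.mem_cons.mp hmem with h | h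
        · exact absurd h.symm hef
        · exact h
      obtain ⟨a₁, b₁, h1, h2, h3⟩ := ih hnd.2 hmem'
      have hadj' : H.Adj x c := by
        rw [hH, deleteEdges_adj]
        exact ⟨hadj, by simpa using hef⟩
      exact ⟨a₁, b₁, h1, hadj'.reachable.trans h2, h3⟩

/-- Finding a crossing edge on a walk. -/
lemma cross_edge {G : SimpleGraph V} {x y : V} (P : V → Prop) (w : G.Walk x y)
    (hx : P x) (hy : ¬ P y) :
    ∃ a b : V, s(a,b) ∈ w.edges ∧ G.Adj a b ∧ P a ∧ ¬ P b := by
  induction w with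
  | nil => exact absurd hx hy
  | @cons x c y hadj w ih =>
    by_cases hc : P c
    · obtain ⟨a, b, h1, h2, h3, h4⟩ := ih hc hy
      exact ⟨a, b, by simp [h1], h2, h3, h4⟩
    · exact ⟨x, c, by simp, hadj, hx, hc⟩

lemma isAcyclic_mono {G H : SimpleGraph V} (h : H ≤ G) (hG : G.IsAcyclic) : H.IsAcyclic := by
  intro v c hc
  exact hG (c.mapLe h) (hc.mapLe h)


variable {V : Type*} [Fintype V] [DecidableEq V]

lemma spanning_nondiag {T : Finset (Sym2 V)} (hT : IsSpanningTree ⊤ T) {f : Sym2 V}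
    (hf : f ∈ T) : ¬ f.IsDiag := by
  have := hT.1 hf
  rwa [edgeSet_top] at this

lemma swap_graph_eq {T : Finset (Sym2 V)} (hT : IsSpanningTree ⊤ T) {e f : Sym2 V}
    (hf : f ∈ T) (he : ¬ e.IsDiag) :
    fromEdgeSet (↑(insert e (T.erase f)) : Set (Sym2 V)) =
      ((fromEdgeSet (↑T : Set (Sym2 V))).deleteEdges {f}) ⊔ fromEdgeSet {e} := by
  classical
  rw [← edgeSet_inj]
  rw [edgeSet_sup, edgeSet_deleteEdges, edgeSet_fromEdgeSet, edgeSet_fromEdgeSet,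
    edgeSet_fromEdgeSet]
  ext g
  simp only [Finset.coe_insert, Finset.coe_erase, Set.mem_diff, Set.mem_insert_iff,
    Set.mem_union, Set.mem_singleton_iff, Set.mem_setOf_eq]
  constructor
  · rintro ⟨rfl | ⟨hgT, hgf⟩, hgd⟩
    · exact Or.inr ⟨rfl, hgd⟩
    · exact Or.inl ⟨⟨hgT, hgd⟩, hgf⟩
  · rintro (⟨⟨hgT, hgd⟩, hgf⟩ | ⟨rfl, hgd⟩)
    · exact ⟨Or.inr ⟨hgT, hgf⟩, hgd⟩
    · exact ⟨Or.inl rfl, hgd⟩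

lemma swap_tree {T : Finset (Sym2 V)} (hT : IsSpanningTree ⊤ T)
    {x y : V} (hxy : x ≠ y) (he : s(x,y) ∉ T) {f : Sym2 V} (hfT : f ∈ T)
    {a b : V} (hfab : f = s(a,b))
    (hra : ((fromEdgeSet (↑T : Set (Sym2 V))).deleteEdges {f}).Reachable x a)
    (hrb : ((fromEdgeSet (↑T : Set (Sym2 V))).deleteEdges {f}).Reachable b y) :
    IsSpanningTree ⊤ (insert s(x,y) (T.erase f)) := by
  classical
  set G := fromEdgeSet (↑T : Set (Sym2 V)) with hGdef
  have hG : G.IsTree := hT.2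
  have hab : a ≠ b := by
    have := spanning_nondiag hT hfT
    rw [hfab] at this
    simpa using this
  have hGadj : G.Adj a b := by
    rw [hGdef, fromEdgeSet_adj]
    exact ⟨hfab ▸ hfT, hab⟩
  set H := G.deleteEdges {f} with hHdef
  have hbridge : ¬ H.Reachable a b := by
    have hb := (isAcyclic_iff_forall_adj_isBridge.mp hG.IsAcyclic) hGadj
    rw [isBridge_iff] at hb
    rw [hHdef, hfab]
    exact hb
  have hnxy : ¬ H.Reachable x y := fun h => hbridge (hra.symm.trans (h.trans hrb.symm))
  set K := H ⊔ fromEdgeSet {s(x,y)} with hKdef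
  have hHK : H ≤ K := le_sup_left
  have hKadj : K.Adj x y := by
    rw [hKdef, sup_adj, fromEdgeSet_adj]
    exact Or.inr ⟨rfl, hxy⟩
  have hrxyK : K.Reachable x y := hKadj.reachable
  have hNe : Nonempty V := hG.isConnected.nonempty
  have hKconn : K.Connected := by
    rw [connected_iff]
    refine ⟨fun z t => ?_, hNe⟩
    obtain ⟨w⟩ := hG.isConnected.preconnected z t
    have hsplit := reach_split (a := a) (b := b) w
    rw [← hfab, ← hHdef] at hsplit
    rcases hsplit with h | ⟨h1, h2⟩ | ⟨h1, h2⟩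
    · exact h.mono hHK
    · exact ((h1.trans hra.symm).mono hHK).trans <| hrxyK.trans <|
        ((hrb.symm.trans h2).mono hHK)
    · exact ((h1.trans hrb).mono hHK).trans <| hrxyK.symm.trans <|
        ((hra.trans h2).mono hHK)
  have hKes : K.edgeSet = H.edgeSet ∪ {s(x,y)} := by
    rw [hKdef, edgeSet_sup, edgeSet_fromEdgeSet]
    congr 1
    ext g
    simp only [Set.mem_diff, Set.mem_singleton_iff, Set.mem_setOf_eq, and_iff_left_iff_imp]
    rintro rfl
    simpa using hxy
  have hxynH : s(x,y) ∉ H.edgeSet := by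
    rw [hHdef, edgeSet_deleteEdges, hGdef, edgeSet_fromEdgeSet]
    rintro ⟨⟨hmem, -⟩, -⟩
    exact he hmem
  have hKacyc : K.IsAcyclic := by
    intro v c hc
    by_cases hec : s(x,y) ∈ c.edges
    · have hreach : (K \ fromEdgeSet {s(x,y)}).Reachable x y :=
        (adj_and_reachable_delete_edges_iff_exists_cycle.mpr ⟨v, c, hc, hec⟩).2
      have : (K \ fromEdgeSet {s(x,y)}) = H := by
        rw [← edgeSet_inj, edgeSet_sdiff, edgeSet_fromEdgeSet, hKes]
        ext g
        simp only [Set.mem_diff, Set.mem_union, Set.mem_singleton_iff, Set.mem_setOf_eq]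
        constructor
        · rintro ⟨hg1 | hg1, hg2⟩
          · exact hg1
          · exact absurd ⟨hg1, by rw [hg1]; simpa using hxy⟩ hg2
        · intro hg
          refine ⟨Or.inl hg, ?_⟩
          rintro ⟨rfl, -⟩
          exact hxynH hg
      rw [this] at hreach
      exact hnxy hreach
    · have hsub : ∀ g ∈ c.edges, g ∈ H.edgeSet := by
        intro g hg
        have := c.edges_subset_edgeSet hg
        rw [hKes] at this
        rcases this with h | h
        · exact h
        · exact absurd (h ▸ hg) hec
      have hc' : ((c.transfer H hsub)).IsCycle := hc.transfer hsub
      exact (isAcyclic_mono (deleteEdges_le _) hG.IsAcyclic) _ hc'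
  refine ⟨?_, ?_⟩
  · intro g hg
    rw [edgeSet_top]
    simp only [Finset.coe_insert, Set.mem_insert_iff, Finset.coe_erase, Set.mem_diff] at hg
    rcases hg with rfl | ⟨hg, -⟩
    · simpa using hxy
    · exact spanning_nondiag hT hg
  · rw [swap_graph_eq hT hfT (by simpa using hxy)]
    exact ⟨hKconn, hKacyc⟩

lemma swap_tree_of_path_edge {T : Finset (Sym2 V)} (hT : IsSpanningTree ⊤ T)
    {x y : V} (hxy : x ≠ y) (he : s(x,y) ∉ T)
    {p : (fromEdgeSet (↑T : Set (Sym2 V))).Walk x y} (hp : p.IsPath) {f : Sym2 V}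
    (hf : f ∈ p.edges) :
    f ∈ T ∧ IsSpanningTree ⊤ (insert s(x,y) (T.erase f)) := by
  have hfT : f ∈ T := by
    have := p.edges_subset_edgeSet hf
    rw [edgeSet_fromEdgeSet] at this
    exact this.1
  induction f with
  | _ a b =>
    obtain ⟨a₁, b₁, h1, h2, h3⟩ := split_at_edge p hp.edges_nodup hf
    exact ⟨hfT, swap_tree hT hxy he hfT h1.symm h2 h3⟩

lemma tree_exists_swap {T : Finset (Sym2 V)} (hT : IsSpanningTree ⊤ T)
    {x y : V} (hxy : x ≠ y) (he : s(x,y) ∉ T) :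
    ∃ f ∈ T, IsSpanningTree ⊤ (insert s(x,y) (T.erase f)) := by
  obtain ⟨w⟩ := hT.2.isConnected.preconnected x y
  set p := w.toPath with hpdef
  have hp : (p : (fromEdgeSet (↑T : Set (Sym2 V))).Walk x y).IsPath := p.2
  have hnn : ¬ (p : (fromEdgeSet (↑T : Set (Sym2 V))).Walk x y).Nil :=
    SimpleGraph.Walk.not_nil_of_ne hxy
  obtain ⟨c, hadj, q, hq⟩ := SimpleGraph.Walk.not_nil_iff.mp hnn
  have hf : s(x, c) ∈ (p : (fromEdgeSet (↑T : Set (Sym2 V))).Walk x y).edges := by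
    rw [hq]; simp
  obtain ⟨h1, h2⟩ := swap_tree_of_path_edge hT hxy he hp hf
  exact ⟨s(x, c), h1, h2⟩

lemma exchange {T T' : Finset (Sym2 V)} (hT : IsSpanningTree ⊤ T)
    (hT' : IsSpanningTree ⊤ T') {e : Sym2 V} (heT' : e ∈ T') (heT : e ∉ T) :
    ∃ f ∈ T, f ∉ T' ∧ IsSpanningTree ⊤ (insert e (T.erase f)) ∧
      IsSpanningTree ⊤ (insert f (T'.erase e)) := by
  induction e with
  | _ x y =>
    have hxy : x ≠ y := by
      have := spanning_nondiag hT' heT'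
      simpa using this
    set G' := fromEdgeSet (↑T' : Set (Sym2 V)) with hG'def
    set H' := G'.deleteEdges {s(x,y)} with hH'def
    have hbridge : ¬ H'.Reachable x y := by
      have hadj : G'.Adj x y := by rw [hG'def, fromEdgeSet_adj]; exact ⟨heT', hxy⟩
      have hb := (isAcyclic_iff_forall_adj_isBridge.mp hT'.2.IsAcyclic) hadj
      rw [isBridge_iff] at hb
      exact hb
    obtain ⟨w⟩ := hT.2.isConnected.preconnected x y
    set p := w.toPath with hpdef
    obtain ⟨a, b, hab1, hab2, hab3, hab4⟩ :=
      cross_edge (fun z => H'.Reachable x z) (p : (fromEdgeSet (↑T : Set (Sym2 V))).Walk x y)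
        (Reachable.refl x) hbridge
    have hfT : s(a,b) ∈ T := by
      have := fromEdgeSet_adj (↑T : Set (Sym2 V)) |>.mp hab2
      exact this.1
    have hanb : a ≠ b := hab2.ne
    have hfe : s(a,b) ≠ s(x,y) := fun h => heT (h ▸ hfT)
    have hfT' : s(a,b) ∉ T' := by
      intro hmem
      have hadj' : H'.Adj a b := by
        rw [hH'def, deleteEdges_adj, hG'def, fromEdgeSet_adj]
        exact ⟨⟨hmem, hanb⟩, by simpa using hfe⟩
      exact hab4 (hab3.trans hadj'.reachable)
    have hswap1 : IsSpanningTree ⊤ (insert s(x,y) (T.erase s(a,b))) :=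
      (swap_tree_of_path_edge hT hxy heT p.2 hab1).2
    have hrb : H'.Reachable y b := by
      rw [hH'def]
      rcases two_comp hT'.2.isConnected.preconnected x y b with h | h
      · exact absurd (hH'def ▸ h.symm) hab4
      · exact h.symm
    have hswap2 : IsSpanningTree ⊤ (insert s(a,b) (T'.erase s(x,y))) :=
      swap_tree hT' hanb hfT' heT' rfl hab3.symm hrb
    exact ⟨s(a,b), hfT, hfT', hswap1, hswap2⟩

lemma spanning_card {T : Finset (Sym2 V)} (hT : IsSpanningTree ⊤ T) :
    T.card + 1 = Fintype.card V := by
  classical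
  have hfin : Fintype (fromEdgeSet (↑T : Set (Sym2 V))).edgeSet := by
    apply Set.Finite.fintype
    rw [edgeSet_fromEdgeSet]
    exact (T.finite_toSet.diff)
  have h := hT.2.card_edgeFinset
  have heq : (fromEdgeSet (↑T : Set (Sym2 V))).edgeFinset = T := by
    apply Finset.coe_injective
    rw [coe_edgeFinset, edgeSet_fromEdgeSet]
    ext g
    simp only [Set.mem_diff, Finset.mem_coe, Set.mem_setOf_eq, and_iff_left_iff_imp]
    exact fun hg => spanning_nondiag hT hg
  rwa [heq] at h

lemma sum_swap_eq {T : Finset (Sym2 V)} {e f : Sym2 V} (he : e ∉ T) (hf : f ∈ T)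
    (u : Sym2 V → ℝ) :
    ∑ g ∈ insert e (T.erase f), u g = u e + (∑ g ∈ T, u g - u f) := by
  rw [Finset.sum_insert (fun h => he (Finset.mem_of_mem_erase h)),
    Finset.sum_erase_eq_sub hf]

lemma mst_iff {T : Finset (Sym2 V)} (hT : IsSpanningTree ⊤ T) (u : Sym2 V → ℝ) :
    (∀ T' : Finset (Sym2 V), IsSpanningTree ⊤ T' → T' ≠ T →
      ∑ e ∈ T, u e < ∑ e ∈ T', u e) ↔
    (∀ e : Sym2 V, ¬ e.IsDiag → e ∉ T → ∀ f ∈ T,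
      IsSpanningTree ⊤ (insert e (T.erase f)) → u f < u e) := by
  constructor
  · intro hM e hed heT f hfT hsp
    have hne : insert e (T.erase f) ≠ T := by
      intro h
      exact heT (h ▸ Finset.mem_insert_self e _)
    have := hM _ hsp hne
    rw [sum_swap_eq heT hfT] at this
    linarith
  · intro H
    have aux : ∀ k : ℕ, ∀ T' : Finset (Sym2 V), IsSpanningTree ⊤ T' → T' ≠ T →
        (T' \ T).card = k → ∑ e ∈ T, u e < ∑ e ∈ T', u e := by
      intro k
      induction k using Nat.strong_induction_on with
      | _ k ih =>
        intro T' hT' hne hcard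
        have hex : ∃ e, e ∈ T' \ T := by
          by_contra hcon
          push_neg at hcon
          have hsub : T' ⊆ T := fun g hg => by
            by_contra hgT
            exact hcon g (Finset.mem_sdiff.mpr ⟨hg, hgT⟩)
          have hcards : T.card ≤ T'.card := by
            have h1 := spanning_card hT
            have h2 := spanning_card hT'
            omega
          exact hne (Finset.eq_of_subset_of_card_le hsub hcards)
        obtain ⟨e, he⟩ := hex
        rw [Finset.mem_sdiff] at he
        obtain ⟨f, hfT, hfT', hsp1, hsp2⟩ := exchange hT hT' he.1 he.2
        have hed : ¬ e.IsDiag := spanning_nondiag hT' he.1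
        have hufe : u f < u e := H e hed he.2 f hfT hsp1
        set T'' := insert f (T'.erase e) with hT''def
        have hsum : ∑ g ∈ T'', u g = u f + (∑ g ∈ T', u g - u e) :=
          sum_swap_eq hfT' he.1 u
        have hlt : ∑ g ∈ T'', u g < ∑ g ∈ T', u g := by rw [hsum]; linarith
        by_cases hTT : T'' = T
        · rw [← hTT]; exact hlt
        · have hdiff : T'' \ T = (T' \ T).erase e := by
            ext g
            simp only [hT''def, Finset.mem_sdiff, Finset.mem_insert, Finset.mem_erase]
            constructor
            · rintro ⟨rfl | ⟨hg1, hg2⟩, hg3⟩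
              · exact absurd hfT hg3
              · exact ⟨hg1, hg2, hg3⟩
            · rintro ⟨hg1, hg2, hg3⟩
              exact ⟨Or.inr ⟨hg1, hg2⟩, hg3⟩
          have hcard' : (T'' \ T).card < k := by
            rw [hdiff, ← hcard]
            exact Finset.card_erase_lt_of_mem (Finset.mem_sdiff.mpr he)
          exact (ih _ hcard' T'' hsp2 hTT rfl).trans hlt
    intro T' hT' hne
    exact aux _ T' hT' hne rfl

section MeasureHelpers
open scoped ENNReal

lemma measurable_finset_sup' {ι : Type*} [Fintype ι]
    (s : Finset ι) (h : s.Nonempty) :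
    Measurable fun u : ι → ℝ => s.sup' h u := by
  induction h using Finset.Nonempty.cons_induction with
  | singleton a =>
    have : (fun u : ι → ℝ => Finset.sup' {a} (Finset.singleton_nonempty a) u) =
        fun u : ι → ℝ => u a := by
      funext u; simp
    rw [this]; exact measurable_pi_apply a
  | cons a s ha hs ih =>
    have : (fun u : ι → ℝ => (Finset.cons a s ha).sup' (Finset.cons_nonempty ha) u) =
        fun u : ι → ℝ => max (u a) (s.sup' hs u) := by
      funext u; rw [Finset.sup'_cons (H := hs)]
    rw [this]; exact (measurable_pi_apply a).max ih

lemma factor_eq {A : Set ℝ} (hA : MeasurableSet A) {a : ℝ} (ha : a ∈ Set.Icc (0:ℝ) 1) :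
    (volume.restrict (Set.Icc (0:ℝ) 1)) (A ∩ Set.Ioi a) =
      ((ENNReal.ofReal (1 - a))⁻¹ * volume (A ∩ Set.Icc a 1)) *
        (volume.restrict (Set.Icc (0:ℝ) 1)) (Set.Ioi a) := by
  obtain ⟨ha0, ha1⟩ := ha
  rw [Measure.restrict_apply (hA.inter measurableSet_Ioi),
    Measure.restrict_apply measurableSet_Ioi]
  rcases eq_or_lt_of_le ha1 with rfl | hlt
  · have h1 : Set.Ioi (1:ℝ) ∩ Set.Icc 0 1 = ∅ := by
      ext x; simp only [Set.mem_inter_iff, Set.mem_Ioi, Set.mem_Icc, Set.mem_empty_iff_false,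
        iff_false]
      rintro ⟨h1, -, h2⟩; linarith
    have h2 : A ∩ Set.Ioi (1:ℝ) ∩ Set.Icc 0 1 = ∅ := by
      rw [Set.inter_assoc, h1, Set.inter_empty]
    rw [h1, h2, measure_empty, mul_zero]
  · have hIoc : Set.Ioi a ∩ Set.Icc 0 1 = Set.Ioc a 1 := by
      ext x; simp only [Set.mem_inter_iff, Set.mem_Ioi, Set.mem_Icc, Set.mem_Ioc]
      constructor
      · rintro ⟨h1, -, h2⟩; exact ⟨h1, h2⟩
      · rintro ⟨h1, h2⟩; exact ⟨h1, le_trans ha0 h1.le, h2⟩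
    have hAIoc : A ∩ Set.Ioi a ∩ Set.Icc 0 1 = A ∩ Set.Ioc a 1 := by
      rw [Set.inter_assoc, hIoc]
    have hvol : volume (Set.Ioc a 1) = ENNReal.ofReal (1 - a) := by
      rw [Real.volume_Ioc]
    have hAicc : volume (A ∩ Set.Icc a 1) = volume (A ∩ Set.Ioc a 1) :=
      (measure_congr (Filter.EventuallyEq.inter (Filter.EventuallyEq.refl _ _)
        (Ioc_ae_eq_Icc (μ := volume)))).symm
    rw [hAIoc, hIoc, hvol, hAicc]
    have hne : ENNReal.ofReal (1 - a) ≠ 0 := by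
      simp only [ne_eq, ENNReal.ofReal_eq_zero, not_le]; linarith
    have hnt : ENNReal.ofReal (1 - a) ≠ ⊤ := ENNReal.ofReal_ne_top
    rw [mul_comm ((ENNReal.ofReal (1 - a))⁻¹) _, mul_assoc, ENNReal.inv_mul_cancel hne hnt,
      mul_one]

lemma prod_subtype_filter {α : Type*} [Fintype α] (P D : α → Prop) [DecidablePred P]
    [DecidablePred D] [Fintype {e : α // ¬ P e}] (g : α → ℝ≥0∞) (hg : ∀ e, D e → g e = 1) :
    (∏ i : {e : α // ¬ P e}, g i.1) =
      ∏ e ∈ Finset.univ.filter (fun e => ¬ D e ∧ ¬ P e), g e := by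
  rw [← Finset.prod_subtype (Finset.univ.filter (fun e => ¬ P e))
    (fun x => by simp) g]
  rw [Finset.prod_filter, Finset.prod_filter]
  refine Finset.prod_congr rfl fun e _ => ?_
  by_cases hP : P e <;> by_cases hD : D e <;> simp [hP, hD, hg e]

open Classical in
noncomputable def Sfil {V : Type*} [Fintype V] [DecidableEq V] (T : Finset (Sym2 V)) (e : Sym2 V) :
    Finset (Sym2 V) :=
  T.filter (fun f => IsSpanningTree (⊤ : SimpleGraph V) (insert e (T.erase f)))

open Classical in
noncomputable def mSup {V : Type*} [Fintype V] [DecidableEq V] (T : Finset (Sym2 V))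
    (u : Sym2 V → ℝ) (e : Sym2 V) : ℝ :=
  if h : (Sfil T e).Nonempty then (Sfil T e).sup' h u else 0

section MSup
variable {V : Type*} [Fintype V] [DecidableEq V]

lemma Sfil_subset (T : Finset (Sym2 V)) (e : Sym2 V) : Sfil T e ⊆ T :=
  Finset.filter_subset _ _

lemma Sfil_nonempty {T : Finset (Sym2 V)} (hT : IsSpanningTree ⊤ T) {e : Sym2 V}
    (hed : ¬ e.IsDiag) (heT : e ∉ T) : (Sfil T e).Nonempty := by
  induction e with
  | _ x y =>
    have hxy : x ≠ y := by simpa using hed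
    obtain ⟨f, hf1, hf2⟩ := tree_exists_swap hT hxy heT
    exact ⟨f, Finset.mem_filter.mpr ⟨hf1, hf2⟩⟩

lemma sSup_eq_mSup {T : Finset (Sym2 V)} (hT : IsSpanningTree ⊤ T) {e : Sym2 V}
    (hed : ¬ e.IsDiag) (heT : e ∉ T) (u : Sym2 V → ℝ) :
    sSup (u '' {f | f ∈ T ∧ IsSpanningTree (⊤ : SimpleGraph V) (insert e (T.erase f))}) =
      mSup T u e := by
  have hne := Sfil_nonempty hT hed heT
  have hset : {f | f ∈ T ∧ IsSpanningTree (⊤ : SimpleGraph V) (insert e (T.erase f))} =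
      ↑(Sfil T e) := by
    ext f
    simp [Sfil, Finset.mem_filter]
  rw [hset, ← Finset.sup'_eq_csSup_image (Sfil T e) hne u, mSup, dif_pos hne]

lemma mSup_eq_of_eqOn {T : Finset (Sym2 V)} {u u' : Sym2 V → ℝ}
    (h : ∀ f ∈ T, u f = u' f) (e : Sym2 V) : mSup T u e = mSup T u' e := by
  rw [mSup, mSup]
  by_cases hne : (Sfil T e).Nonempty
  · rw [dif_pos hne, dif_pos hne]
    exact Finset.sup'_congr hne rfl (fun f hf => h f (Sfil_subset T e hf))
  · rw [dif_neg hne, dif_neg hne]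

lemma measurable_mSup (T : Finset (Sym2 V)) (e : Sym2 V) :
    Measurable (fun u : Sym2 V → ℝ => mSup T u e) := by
  by_cases hne : (Sfil T e).Nonempty
  · have : (fun u : Sym2 V → ℝ => mSup T u e) =
        fun u => (Sfil T e).sup' hne u := by
      funext u; rw [mSup, dif_pos hne]
    rw [this]
    exact measurable_finset_sup' _ hne
  · have : (fun u : Sym2 V → ℝ => mSup T u e) = fun _ => (0:ℝ) := by
      funext u; rw [mSup, dif_neg hne]
    rw [this]
    exact measurable_const

lemma mSup_mem_Icc {T : Finset (Sym2 V)} (hT : IsSpanningTree ⊤ T) {e : Sym2 V}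
    (hed : ¬ e.IsDiag) (heT : e ∉ T) {u : Sym2 V → ℝ}
    (hu : ∀ f ∈ T, u f ∈ Set.Icc (0:ℝ) 1) : mSup T u e ∈ Set.Icc (0:ℝ) 1 := by
  have hne := Sfil_nonempty hT hed heT
  rw [mSup, dif_pos hne]
  obtain ⟨f₀, hf₀⟩ := id hne
  constructor
  · exact le_trans (hu f₀ (Sfil_subset T e hf₀)).1 (Finset.le_sup' u hf₀)
  · exact Finset.sup'_le hne u (fun f hf => (hu f (Sfil_subset T e hf)).2)

lemma mem_M_iff {T : Finset (Sym2 V)} (hT : IsSpanningTree ⊤ T) (u : Sym2 V → ℝ) :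
    (∀ T' : Finset (Sym2 V), IsSpanningTree (⊤ : SimpleGraph V) T' → T' ≠ T →
      ∑ e ∈ T, u e < ∑ e ∈ T', u e) ↔
    (∀ e : Sym2 V, ¬ e.IsDiag → e ∉ T → mSup T u e < u e) := by
  rw [mst_iff hT u]
  constructor
  · intro H e hed heT
    have hne := Sfil_nonempty hT hed heT
    rw [mSup, dif_pos hne, Finset.sup'_lt_iff hne]
    intro f hf
    rw [Sfil, Finset.mem_filter] at hf
    exact H e hed heT f hf.1 hf.2
  · intro H e hed heT f hfT hsp
    have hne := Sfil_nonempty hT hed heT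
    have := H e hed heT
    rw [mSup, dif_pos hne, Finset.sup'_lt_iff hne] at this
    exact this f (Finset.mem_filter.mpr ⟨hfT, hsp⟩)

end MSup

open Classical in
lemma core_mst (n : ℕ) (T : Finset (Sym2 (Fin n)))
    (hT : IsSpanningTree (⊤ : SimpleGraph (Fin n)) T)
    (A : Sym2 (Fin n) → Set ℝ) (hA : ∀ e, MeasurableSet (A e))
    (B : Set (Sym2 (Fin n) → ℝ)) (hB : MeasurableSet B)
    (hBdep : ∀ u u' : Sym2 (Fin n) → ℝ, (∀ e ∈ T, u e = u' e) → (u ∈ B ↔ u' ∈ B)) :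
    (Measure.pi fun _ : Sym2 (Fin n) => volume.restrict (Set.Icc (0 : ℝ) 1))
        ({u : Sym2 (Fin n) → ℝ |
            ∀ T' : Finset (Sym2 (Fin n)), IsSpanningTree (⊤ : SimpleGraph (Fin n)) T' →
              T' ≠ T → ∑ e ∈ T, u e < ∑ e ∈ T', u e} ∩ B ∩
          {u : Sym2 (Fin n) → ℝ | ∀ e : Sym2 (Fin n), ¬ e.IsDiag → e ∉ T → u e ∈ A e})
      = ∫⁻ u in
          ({u : Sym2 (Fin n) → ℝ |
            ∀ T' : Finset (Sym2 (Fin n)), IsSpanningTree (⊤ : SimpleGraph (Fin n)) T' →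
              T' ≠ T → ∑ e ∈ T, u e < ∑ e ∈ T', u e} ∩ B),
          ∏ e ∈ Finset.univ.filter (fun e : Sym2 (Fin n) => ¬ e.IsDiag ∧ e ∉ T),
            ((ENNReal.ofReal (1 - mSup T u e))⁻¹ *
              volume (A e ∩ Set.Icc (mSup T u e) 1))
          ∂(Measure.pi fun _ : Sym2 (Fin n) => volume.restrict (Set.Icc (0 : ℝ) 1)) := by
  classical
  set μ0 : Measure ℝ := volume.restrict (Set.Icc (0:ℝ) 1) with hμ0
  haveI hprob : IsProbabilityMeasure μ0 := by
    constructor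
    rw [hμ0, Measure.restrict_apply MeasurableSet.univ, Set.univ_inter, Real.volume_Icc]
    norm_num
  set M : Set (Sym2 (Fin n) → ℝ) := {u | ∀ T' : Finset (Sym2 (Fin n)),
    IsSpanningTree (⊤ : SimpleGraph (Fin n)) T' → T' ≠ T →
      ∑ e ∈ T, u e < ∑ e ∈ T', u e} with hMdef
  set C : Set (Sym2 (Fin n) → ℝ) :=
    {u | ∀ e : Sym2 (Fin n), ¬ e.IsDiag → e ∉ T → u e ∈ A e} with hCdef
  set Ext : Finset (Sym2 (Fin n)) :=
    Finset.univ.filter (fun e : Sym2 (Fin n) => ¬ e.IsDiag ∧ e ∉ T) with hExtdef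
  set μ := (Measure.pi fun _ : Sym2 (Fin n) => μ0) with hμdef
  set F : (Sym2 (Fin n) → ℝ) → ENNReal := fun u => ∏ e ∈ Ext,
    ((ENNReal.ofReal (1 - mSup T u e))⁻¹ * volume (A e ∩ Set.Icc (mSup T u e) 1)) with hFdef
  -- measurability of the events
  have hMmeas : MeasurableSet M := by
    have hrw : M = ⋂ T' : Finset (Sym2 (Fin n)),
        {u : Sym2 (Fin n) → ℝ | IsSpanningTree (⊤ : SimpleGraph (Fin n)) T' → T' ≠ T →
          ∑ e ∈ T, u e < ∑ e ∈ T', u e} := by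
      rw [hMdef]; ext u; simp only [Set.mem_iInter, Set.mem_setOf_eq]
    rw [hrw]
    refine MeasurableSet.iInter fun T' => ?_
    by_cases h1 : IsSpanningTree (⊤ : SimpleGraph (Fin n)) T'
    · by_cases h2 : T' ≠ T
      · have : {u : Sym2 (Fin n) → ℝ | IsSpanningTree (⊤ : SimpleGraph (Fin n)) T' →
            T' ≠ T → ∑ e ∈ T, u e < ∑ e ∈ T', u e} =
            {u : Sym2 (Fin n) → ℝ | ∑ e ∈ T, u e < ∑ e ∈ T', u e} := by
          ext u; simp [h1, h2]
        rw [this]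
        exact measurableSet_lt (Finset.measurable_sum _ fun i _ => measurable_pi_apply i)
          (Finset.measurable_sum _ fun i _ => measurable_pi_apply i)
      · have : {u : Sym2 (Fin n) → ℝ | IsSpanningTree (⊤ : SimpleGraph (Fin n)) T' →
            T' ≠ T → ∑ e ∈ T, u e < ∑ e ∈ T', u e} = Set.univ := by
          ext u; simp [h2]
        rw [this]; exact MeasurableSet.univ
    · have : {u : Sym2 (Fin n) → ℝ | IsSpanningTree (⊤ : SimpleGraph (Fin n)) T' →
          T' ≠ T → ∑ e ∈ T, u e < ∑ e ∈ T', u e} = Set.univ := by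
        ext u; simp [h1]
      rw [this]; exact MeasurableSet.univ
  have hCmeas : MeasurableSet C := by
    have hrw : C = ⋂ e : Sym2 (Fin n),
        {u : Sym2 (Fin n) → ℝ | ¬ e.IsDiag → e ∉ T → u e ∈ A e} := by
      rw [hCdef]; ext u; simp only [Set.mem_iInter, Set.mem_setOf_eq]
    rw [hrw]
    refine MeasurableSet.iInter fun e => ?_
    by_cases h1 : ¬ e.IsDiag
    · by_cases h2 : e ∉ T
      · have : {u : Sym2 (Fin n) → ℝ | ¬ e.IsDiag → e ∉ T → u e ∈ A e} =
            (fun u : Sym2 (Fin n) → ℝ => u e) ⁻¹' (A e) := by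
          ext u; simp [h1, h2]
        rw [this]; exact (measurable_pi_apply e) (hA e)
      · have : {u : Sym2 (Fin n) → ℝ | ¬ e.IsDiag → e ∉ T → u e ∈ A e} = Set.univ := by
          ext u; simp [h2]
        rw [this]; exact MeasurableSet.univ
    · have : {u : Sym2 (Fin n) → ℝ | ¬ e.IsDiag → e ∉ T → u e ∈ A e} = Set.univ := by
        ext u; simp [h1]
      rw [this]; exact MeasurableSet.univ
  have hMB : MeasurableSet (M ∩ B) := hMmeas.inter hB
  have hMBC : MeasurableSet (M ∩ B ∩ C) := hMB.inter hCmeas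
  have hFmeas : Measurable F := by
    rw [hFdef]
    refine Finset.measurable_prod _ fun e _ => ?_
    refine Measurable.mul ?_ ?_
    · exact (ENNReal.measurable_ofReal.comp (measurable_const.sub (measurable_mSup T e))).inv
    · have hanti : Antitone (fun t : ℝ => volume (A e ∩ Set.Icc t 1)) := fun s t hst =>
        measure_mono (Set.inter_subset_inter_right _ (Set.Icc_subset_Icc hst le_rfl))
      exact hanti.measurable.comp (measurable_mSup T e)
  -- the product splitting
  haveI hfin1 : Fintype {e : Sym2 (Fin n) // e ∈ T} := Subtype.fintype _
  haveI hfin2 : Fintype {e : Sym2 (Fin n) // ¬ e ∈ T} := Subtype.fintype _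
  set φ := MeasurableEquiv.piEquivPiSubtypeProd (fun _ : Sym2 (Fin n) => ℝ)
    (fun e => e ∈ T) with hφdef
  set ν₁ := (Measure.pi fun _ : {e : Sym2 (Fin n) // e ∈ T} => μ0) with hν₁def
  set ν₂ := (Measure.pi fun _ : {e : Sym2 (Fin n) // ¬ e ∈ T} => μ0) with hν₂def
  have hmp : MeasurePreserving φ μ (ν₁.prod ν₂) := by
    rw [hμdef, hν₁def, hν₂def, hφdef]
    have h := measurePreserving_piEquivPiSubtypeProd (fun _ : Sym2 (Fin n) => μ0)
      (fun e => e ∈ T)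
    convert h using 4 <;> exact Subsingleton.elim _ _
  have hmps : MeasurePreserving φ.symm (ν₁.prod ν₂) μ := hmp.symm
  have hextT : ∀ (w : {e : Sym2 (Fin n) // e ∈ T} → ℝ)
      (v : {e : Sym2 (Fin n) // ¬ e ∈ T} → ℝ) (e : Sym2 (Fin n)) (h : e ∈ T),
      φ.symm (w, v) e = w ⟨e, h⟩ := by
    intro w v e h
    rw [hφdef]
    simp [MeasurableEquiv.piEquivPiSubtypeProd, Equiv.piEquivPiSubtypeProd_symm_apply, h]
  have hextN : ∀ (w : {e : Sym2 (Fin n) // e ∈ T} → ℝ)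
      (v : {e : Sym2 (Fin n) // ¬ e ∈ T} → ℝ) (e : Sym2 (Fin n)) (h : ¬ e ∈ T),
      φ.symm (w, v) e = v ⟨e, h⟩ := by
    intro w v e h
    rw [hφdef]
    simp [MeasurableEquiv.piEquivPiSubtypeProd, Equiv.piEquivPiSubtypeProd_symm_apply, h]
  set uext : ({e : Sym2 (Fin n) // e ∈ T} → ℝ) → (Sym2 (Fin n) → ℝ) :=
    fun w => φ.symm (w, fun _ => 0) with huextdef
  have htreeeq : ∀ w v (f : Sym2 (Fin n)) (hf : f ∈ T), φ.symm (w, v) f = uext w f := by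
    intro w v f hf
    rw [hextT w v f hf, huextdef]
    exact (hextT w (fun _ => 0) f hf).symm
  have hmeq : ∀ w v e, mSup T (φ.symm (w, v)) e = mSup T (uext w) e :=
    fun w v e => mSup_eq_of_eqOn (fun f hf => htreeeq w v f hf) e
  have hFeq : ∀ w v, F (φ.symm (w, v)) = F (uext w) := by
    intro w v
    rw [hFdef]
    exact Finset.prod_congr rfl fun e _ => by rw [hmeq w v e]
  have hBeq : ∀ w v, (φ.symm (w, v) ∈ B) ↔ uext w ∈ B :=
    fun w v => hBdep _ _ (fun f hf => htreeeq w v f hf)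
  have hMchar : ∀ w v, (φ.symm (w, v) ∈ M) ↔
      ∀ i : {e : Sym2 (Fin n) // ¬ e ∈ T}, ¬ i.1.IsDiag → mSup T (uext w) i.1 < v i := by
    intro w v
    rw [hMdef, Set.mem_setOf_eq, mem_M_iff hT]
    constructor
    · intro H i hid
      have := H i.1 hid i.2
      rwa [hmeq w v i.1, hextN w v i.1 i.2] at this
    · intro H e hed heT
      have := H ⟨e, heT⟩ hed
      rwa [← hmeq w v e, ← hextN w v e heT] at this
  have hCchar : ∀ w v, (φ.symm (w, v) ∈ C) ↔
      ∀ i : {e : Sym2 (Fin n) // ¬ e ∈ T}, ¬ i.1.IsDiag → v i ∈ A i.1 := by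
    intro w v
    rw [hCdef, Set.mem_setOf_eq]
    constructor
    · intro H i hid
      have := H i.1 hid i.2
      rwa [hextN w v i.1 i.2] at this
    · intro H e hed heT
      have := H ⟨e, heT⟩ hed
      rwa [← hextN w v e heT] at this
  -- slices
  set sl1 : ({e : Sym2 (Fin n) // e ∈ T} → ℝ) → Set ({e : Sym2 (Fin n) // ¬ e ∈ T} → ℝ) :=
    fun w => if uext w ∈ B then Set.univ.pi (fun i : {e : Sym2 (Fin n) // ¬ e ∈ T} =>
      if i.1.IsDiag then Set.univ else A i.1 ∩ Set.Ioi (mSup T (uext w) i.1)) else ∅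
    with hsl1def
  set sl2 : ({e : Sym2 (Fin n) // e ∈ T} → ℝ) → Set ({e : Sym2 (Fin n) // ¬ e ∈ T} → ℝ) :=
    fun w => if uext w ∈ B then Set.univ.pi (fun i : {e : Sym2 (Fin n) // ¬ e ∈ T} =>
      if i.1.IsDiag then Set.univ else Set.Ioi (mSup T (uext w) i.1)) else ∅
    with hsl2def
  have hsl1app : ∀ w, sl1 w = (if uext w ∈ B then
      Set.univ.pi (fun i : {e : Sym2 (Fin n) // ¬ e ∈ T} =>
      if i.1.IsDiag then Set.univ else A i.1 ∩ Set.Ioi (mSup T (uext w) i.1)) else ∅) :=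
    fun _ => rfl
  have hsl2app : ∀ w, sl2 w = (if uext w ∈ B then
      Set.univ.pi (fun i : {e : Sym2 (Fin n) // ¬ e ∈ T} =>
      if i.1.IsDiag then Set.univ else Set.Ioi (mSup T (uext w) i.1)) else ∅) :=
    fun _ => rfl
  have hpre1 : ∀ w, (Prod.mk w ⁻¹' (φ.symm ⁻¹' (M ∩ B ∩ C))) = sl1 w := by
    intro w
    ext v
    simp only [Set.mem_preimage, Set.mem_inter_iff]
    rw [hMchar w v, hBeq w v, hCchar w v, hsl1app]
    by_cases hb : uext w ∈ B
    · rw [if_pos hb]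
      simp only [Set.mem_pi, Set.mem_univ, forall_true_left, true_implies]
      constructor
      · rintro ⟨⟨hM', -⟩, hC'⟩ i
        by_cases hid : i.1.IsDiag
        · rw [if_pos hid]; trivial
        · rw [if_neg hid]; exact ⟨hC' i hid, hM' i hid⟩
      · intro H
        refine ⟨⟨fun i hid => ?_, hb⟩, fun i hid => ?_⟩
        · have := H i; rw [if_neg hid] at this; exact this.2
        · have := H i; rw [if_neg hid] at this; exact this.1
    · rw [if_neg hb]
      simp [hb]
  have hpre2 : ∀ w, (Prod.mk w ⁻¹' (φ.symm ⁻¹' (M ∩ B))) = sl2 w := by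
    intro w
    ext v
    simp only [Set.mem_preimage, Set.mem_inter_iff]
    rw [hMchar w v, hBeq w v, hsl2app]
    by_cases hb : uext w ∈ B
    · rw [if_pos hb]
      simp only [Set.mem_pi, Set.mem_univ, forall_true_left, true_implies]
      constructor
      · rintro ⟨hM', -⟩ i
        by_cases hid : i.1.IsDiag
        · rw [if_pos hid]; trivial
        · rw [if_neg hid]; exact hM' i hid
      · intro H
        refine ⟨fun i hid => ?_, hb⟩
        have := H i; rw [if_neg hid] at this; exact this
    · rw [if_neg hb]
      simp [hb]
  have hsl2meas : ∀ w, MeasurableSet (sl2 w) := by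
    intro w
    rw [hsl2app]
    split
    · refine MeasurableSet.univ_pi fun i => ?_
      split
      · exact MeasurableSet.univ
      · exact measurableSet_Ioi
    · exact MeasurableSet.empty
  -- slice measures
  have hν₂sl1 : ∀ w, ν₂ (sl1 w) = (if uext w ∈ B then
      ∏ e ∈ Ext, μ0 (A e ∩ Set.Ioi (mSup T (uext w) e)) else 0) := by
    intro w
    rw [hsl1app]
    by_cases hb : uext w ∈ B
    · rw [if_pos hb, if_pos hb, hν₂def, Measure.pi_pi]
      have h1 : ∀ i : {e : Sym2 (Fin n) // ¬ e ∈ T},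
          μ0 (if i.1.IsDiag then Set.univ else A i.1 ∩ Set.Ioi (mSup T (uext w) i.1)) =
          (fun e => if e.IsDiag then (1:ENNReal)
            else μ0 (A e ∩ Set.Ioi (mSup T (uext w) e))) i.1 := by
        intro i
        by_cases hid : i.1.IsDiag <;> simp [hid]
      calc ∏ i : {e : Sym2 (Fin n) // ¬ e ∈ T},
              μ0 (if i.1.IsDiag then Set.univ else A i.1 ∩ Set.Ioi (mSup T (uext w) i.1))
          = ∏ i : {e : Sym2 (Fin n) // ¬ e ∈ T},
              (fun e => if e.IsDiag then (1:ENNReal)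
                else μ0 (A e ∩ Set.Ioi (mSup T (uext w) e))) i.1 :=
            Finset.prod_congr rfl (fun i _ => h1 i)
        _ = ∏ e ∈ Finset.univ.filter (fun e : Sym2 (Fin n) => ¬ e.IsDiag ∧ ¬ e ∈ T),
              (fun e => if e.IsDiag then (1:ENNReal)
                else μ0 (A e ∩ Set.Ioi (mSup T (uext w) e))) e :=
            prod_subtype_filter (fun e : Sym2 (Fin n) => e ∈ T)
              (fun e : Sym2 (Fin n) => e.IsDiag)
              (fun e => if e.IsDiag then (1:ENNReal)
                else μ0 (A e ∩ Set.Ioi (mSup T (uext w) e)))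
              (fun e he => if_pos he)
        _ = ∏ e ∈ Ext, μ0 (A e ∩ Set.Ioi (mSup T (uext w) e)) := by
            rw [hExtdef]
            refine Finset.prod_congr (by ext x; simp) fun e he => ?_
            rw [Finset.mem_filter] at he
            exact if_neg he.2.1
    · rw [if_neg hb, if_neg hb, measure_empty]
  have hν₂sl2 : ∀ w, ν₂ (sl2 w) = (if uext w ∈ B then
      ∏ e ∈ Ext, μ0 (Set.Ioi (mSup T (uext w) e)) else 0) := by
    intro w
    rw [hsl2app]
    by_cases hb : uext w ∈ B
    · rw [if_pos hb, if_pos hb, hν₂def, Measure.pi_pi]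
      have h1 : ∀ i : {e : Sym2 (Fin n) // ¬ e ∈ T},
          μ0 (if i.1.IsDiag then Set.univ else Set.Ioi (mSup T (uext w) i.1)) =
          (fun e => if e.IsDiag then (1:ENNReal)
            else μ0 (Set.Ioi (mSup T (uext w) e))) i.1 := by
        intro i
        by_cases hid : i.1.IsDiag <;> simp [hid]
      calc ∏ i : {e : Sym2 (Fin n) // ¬ e ∈ T},
              μ0 (if i.1.IsDiag then Set.univ else Set.Ioi (mSup T (uext w) i.1))
          = ∏ i : {e : Sym2 (Fin n) // ¬ e ∈ T},
              (fun e => if e.IsDiag then (1:ENNReal)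
                else μ0 (Set.Ioi (mSup T (uext w) e))) i.1 :=
            Finset.prod_congr rfl (fun i _ => h1 i)
        _ = ∏ e ∈ Finset.univ.filter (fun e : Sym2 (Fin n) => ¬ e.IsDiag ∧ ¬ e ∈ T),
              (fun e => if e.IsDiag then (1:ENNReal)
                else μ0 (Set.Ioi (mSup T (uext w) e))) e :=
            prod_subtype_filter (fun e : Sym2 (Fin n) => e ∈ T)
              (fun e : Sym2 (Fin n) => e.IsDiag)
              (fun e => if e.IsDiag then (1:ENNReal)
                else μ0 (Set.Ioi (mSup T (uext w) e)))
              (fun e he => if_pos he)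
        _ = ∏ e ∈ Ext, μ0 (Set.Ioi (mSup T (uext w) e)) := by
            rw [hExtdef]
            refine Finset.prod_congr (by ext x; simp) fun e he => ?_
            rw [Finset.mem_filter] at he
            exact if_neg he.2.1
    · rw [if_neg hb, if_neg hb, measure_empty]
  -- step 1 : left-hand side
  have hstep1 : μ (M ∩ B ∩ C) = ∫⁻ w, ν₂ (sl1 w) ∂ν₁ := by
    rw [← hmps.measure_preimage hMBC.nullMeasurableSet]
    rw [Measure.prod_apply (φ.symm.measurable hMBC)]
    exact lintegral_congr fun w => by rw [hpre1 w]
  -- step 2 : right-hand side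
  have hstep2 : ∫⁻ u in M ∩ B, F u ∂μ = ∫⁻ w, F (uext w) * ν₂ (sl2 w) ∂ν₁ := by
    rw [← lintegral_indicator hMB F]
    rw [← hmps.map_eq]
    rw [lintegral_map_equiv ((M ∩ B).indicator F) φ.symm]
    rw [lintegral_prod (fun z => (M ∩ B).indicator F (φ.symm z))
      (Measurable.aemeasurable (by exact (hFmeas.indicator hMB).comp φ.symm.measurable))]
    refine lintegral_congr fun w => ?_
    have hptw : ∀ v, (M ∩ B).indicator F (φ.symm (w, v)) =
        (sl2 w).indicator (fun _ => F (uext w)) v := by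
      intro v
      have hmem : (φ.symm (w, v) ∈ M ∩ B) ↔ v ∈ sl2 w := by
        rw [← hpre2 w]; rfl
      rw [Set.indicator_apply, Set.indicator_apply]
      by_cases h : φ.symm (w, v) ∈ M ∩ B
      · rw [if_pos h, if_pos (hmem.mp h), hFeq w v]
      · rw [if_neg h, if_neg (fun hv => h (hmem.mpr hv))]
    rw [lintegral_congr hptw, lintegral_indicator_const (hsl2meas w)]
  -- almost-everywhere bound on tree labels
  have hae : ∀ᵐ w ∂ν₁, ∀ i : {e : Sym2 (Fin n) // e ∈ T}, w i ∈ Set.Icc (0:ℝ) 1 := by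
    have hfullmeas : MeasurableSet
        (Set.univ.pi fun _ : {e : Sym2 (Fin n) // e ∈ T} => Set.Icc (0:ℝ) 1) :=
      MeasurableSet.univ_pi fun _ => measurableSet_Icc
    have hfull : ν₁ (Set.univ.pi fun _ : {e : Sym2 (Fin n) // e ∈ T} =>
        Set.Icc (0:ℝ) 1) = 1 := by
      rw [hν₁def, Measure.pi_pi]
      have : μ0 (Set.Icc (0:ℝ) 1) = 1 := by
        rw [hμ0, Measure.restrict_apply measurableSet_Icc, Set.inter_self, Real.volume_Icc]
        norm_num
      simp [this]
    rw [ae_iff]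
    have hcompl : {w : {e : Sym2 (Fin n) // e ∈ T} → ℝ |
        ¬ ∀ i, w i ∈ Set.Icc (0:ℝ) 1} =
        (Set.univ.pi fun _ : {e : Sym2 (Fin n) // e ∈ T} => Set.Icc (0:ℝ) 1)ᶜ := by
      ext w
      simp only [Set.mem_setOf_eq, Set.mem_compl_iff, Set.mem_pi, Set.mem_univ, true_implies]
    rw [hcompl]
    rw [prob_compl_eq_zero_iff hfullmeas]
    exact hfull
  -- pointwise a.e. identity
  have haecong : (fun w => ν₂ (sl1 w)) =ᵐ[ν₁]
      (fun w => F (uext w) * ν₂ (sl2 w)) := by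
    filter_upwards [hae] with w hw
    by_cases hb : uext w ∈ B
    · rw [hν₂sl1 w, hν₂sl2 w, if_pos hb, if_pos hb, hFdef]
      rw [← Finset.prod_mul_distrib]
      refine Finset.prod_congr rfl fun e he => ?_
      have hmem : ¬ e.IsDiag ∧ e ∉ T := by
        have := he
        rw [hExtdef, Finset.mem_filter] at this
        exact this.2
      have hm01 : mSup T (uext w) e ∈ Set.Icc (0:ℝ) 1 := by
        refine mSup_mem_Icc hT hmem.1 hmem.2 (fun f hf => ?_)
        have huf : uext w f = w ⟨f, hf⟩ := hextT w (fun _ => 0) f hf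
        rw [huf]
        exact hw ⟨f, hf⟩
      rw [hμ0]
      exact factor_eq (hA e) hm01
    · rw [hν₂sl1 w, hν₂sl2 w, if_neg hb, if_neg hb, mul_zero]
  rw [hstep1, hstep2]
  exact lintegral_congr_ae haecong


/- **Conditional law of the external labels given the MST data.**
Labels are i.i.d. Uniform[0,1] (the product measure `Measure.pi`). On the event that
`T` is the (unique) minimum spanning tree, conditionally on any event `B` depending
only on the tree labels, the external labels are independent with `U e` uniform on
`[m_e, 1]`, where `m_e` is the maximal tree label on the fundamental path of `e`
(characterized by: `f` lies on the path of `e` iff `insert e (T.erase f)` is again a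
spanning tree). This is expressed by the product integral formula below. -/
open Classical in
theorem stmt_11 (n : ℕ) (T : Finset (Sym2 (Fin n)))
    (hT : IsSpanningTree (⊤ : SimpleGraph (Fin n)) T)
    (A : Sym2 (Fin n) → Set ℝ) (hA : ∀ e, MeasurableSet (A e))
    (B : Set (Sym2 (Fin n) → ℝ)) (hB : MeasurableSet B)
    (hBdep : ∀ u u' : Sym2 (Fin n) → ℝ, (∀ e ∈ T, u e = u' e) → (u ∈ B ↔ u' ∈ B)) :
    (Measure.pi fun _ : Sym2 (Fin n) => volume.restrict (Set.Icc (0 : ℝ) 1))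
        ({u : Sym2 (Fin n) → ℝ |
            ∀ T' : Finset (Sym2 (Fin n)), IsSpanningTree (⊤ : SimpleGraph (Fin n)) T' →
              T' ≠ T → ∑ e ∈ T, u e < ∑ e ∈ T', u e} ∩ B ∩
          {u : Sym2 (Fin n) → ℝ | ∀ e : Sym2 (Fin n), ¬ e.IsDiag → e ∉ T → u e ∈ A e})
      = ∫⁻ u in
          ({u : Sym2 (Fin n) → ℝ |
            ∀ T' : Finset (Sym2 (Fin n)), IsSpanningTree (⊤ : SimpleGraph (Fin n)) T' →
              T' ≠ T → ∑ e ∈ T, u e < ∑ e ∈ T', u e} ∩ B),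
          ∏ e ∈ Finset.univ.filter (fun e : Sym2 (Fin n) => ¬ e.IsDiag ∧ e ∉ T),
            ((ENNReal.ofReal
                (1 - sSup (u '' {f | f ∈ T ∧
                  IsSpanningTree (⊤ : SimpleGraph (Fin n)) (insert e (T.erase f))})))⁻¹ *
              volume (A e ∩ Set.Icc
                (sSup (u '' {f | f ∈ T ∧
                  IsSpanningTree (⊤ : SimpleGraph (Fin n)) (insert e (T.erase f))})) 1))
          ∂(Measure.pi fun _ : Sym2 (Fin n) => volume.restrict (Set.Icc (0 : ℝ) 1)) := by
  rw [core_mst n T hT A hA B hB hBdep]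
  refine lintegral_congr fun u => ?_
  refine Finset.prod_congr rfl fun e he => ?_
  rw [Finset.mem_filter] at he
  rw [sSup_eq_mSup hT he.2.1 he.2.2 u]
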